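/- arXiv:1512.03472 — 5 statements merged into one kernel-verified Lean document; each statement's English description precedes it below -/
import Mathlib

section
/- For all n ≥ 7, the independence number of G_n satisfies α(G_n) ≥ 6n − 28. -/
/-- The vertex set of the graph `G_n`: vectors in `{-1,0,1}^n` with exactly three
nonzero coordinates. -/
def Gvert (n : ℕ) : Type :=
  {v : Fin n → ℤ // (∀ i, v i = -1 ∨ v i = 0 ∨ v i = 1) ∧
    (Finset.univ.filter (fun i => v i ≠ 0)).card = 3}

/-- The graph `G_n`: two such vectors are adjacent iff their scalar product is `1`. -/
def G (n : ℕ) : SimpleGraph (Gvert n) where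
  Adj u v := u ≠ v ∧ ∑ i, u.1 i * v.1 i = 1
  symm := by
    constructor
    rintro u v ⟨h1, h2⟩
    exact ⟨h1.symm, (Finset.sum_congr rfl fun i _ => mul_comm _ _).trans h2⟩
  loopless := by constructor; rintro u ⟨h1, -⟩; exact h1 rfl

/-- A set of vertices is independent if no two of its members are adjacent. -/
def IsIndep {V : Type*} (H : SimpleGraph V) (s : Set V) : Prop :=
  s.Pairwise fun u v => ¬ H.Adj u v

/-- The constant `c(n)` from the paper. -/
def c (n : ℕ) : ℕ := if n % 4 = 0 then 0 else if n % 4 = 1 then 1 else 2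

/-! ### Auxiliary construction -/

/-- Vector with "head" `w` on the first six coordinates and value `t` at coordinate `i`. -/
def Fvec {n : ℕ} (w : Fin 6 → ℤ) (i : Fin n) (t : ℤ) : Fin n → ℤ :=
  fun j => if h : (j : ℕ) < 6 then w ⟨j, h⟩ else if j = i then t else 0

lemma dot_F {n : ℕ} (w w' : Fin 6 → ℤ) (i i' : Fin n)
    (hi : ¬ (i : ℕ) < 6) (hi' : ¬ (i' : ℕ) < 6) (t t' : ℤ) :
    ∑ j : Fin n, Fvec w i t j * Fvec w' i' t' j
      = (∑ k : Fin 6, w k * w' k) + (if i = i' then t * t' else 0) := by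
  have hn : 6 ≤ n := by have := i.isLt; omega
  have hsplit : ∀ j : Fin n, Fvec w i t j * Fvec w' i' t' j
      = (if h : (j : ℕ) < 6 then w ⟨j, h⟩ * w' ⟨j, h⟩ else 0)
        + (if j = i then t else 0) * (if j = i' then t' else 0) := by
    intro j
    by_cases h : (j : ℕ) < 6
    · have hji : j ≠ i := fun e => hi (e ▸ h)
      have hji' : j ≠ i' := fun e => hi' (e ▸ h)
      simp [Fvec, h, hji, hji']
    · simp [Fvec, h]
  rw [Finset.sum_congr rfl fun j _ => hsplit j, Finset.sum_add_distrib]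
  congr 1
  · rw [Fin.sum_univ_eq_sum_range (fun k => if h : k < 6 then w ⟨k, h⟩ * w' ⟨k, h⟩ else 0) n]
    rw [← Finset.sum_subset (Finset.range_subset_range.2 hn)
      (fun k _ hk => by
        have : ¬ k < 6 := by simpa using hk
        simp [this])]
    rw [← Fin.sum_univ_eq_sum_range (fun k => if h : k < 6 then w ⟨k, h⟩ * w' ⟨k, h⟩ else 0) 6]
    exact Finset.sum_congr rfl fun k _ => by simp [k.isLt]
  · rw [Finset.sum_eq_single i]
    · simp only [if_pos rfl]
      split_ifs <;> ring
    · intro b _ hb; rw [if_neg hb, zero_mul]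
    · intro h; exact absurd (Finset.mem_univ i) h

lemma card_F {n : ℕ} (w : Fin 6 → ℤ) (i : Fin n) (hi : ¬ (i : ℕ) < 6) (t : ℤ) :
    (Finset.univ.filter fun j : Fin n => Fvec w i t j ≠ 0).card
      = (Finset.univ.filter fun k : Fin 6 => w k ≠ 0).card + (if t = 0 then 0 else 1) := by
  have hn : 6 ≤ n := by have := i.isLt; omega
  have hset : (Finset.univ.filter fun j : Fin n => Fvec w i t j ≠ 0)
      = ((Finset.univ.filter fun k : Fin 6 => w k ≠ 0).map (Fin.castLEEmb hn))
        ∪ (if t = 0 then ∅ else {i}) := by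
    ext j
    by_cases h : (j : ℕ) < 6
    · have hji : j ≠ i := fun e => hi (e ▸ h)
      simp only [Finset.mem_filter, Finset.mem_univ, true_and, Finset.mem_union,
        Finset.mem_map, Fin.castLEEmb, Function.Embedding.coeFn_mk]
      constructor
      · intro hF
        left
        exact ⟨⟨j, h⟩, by simpa [Fvec, h] using hF, by ext; simp⟩
      · rintro (⟨k, hk, rfl⟩ | hmem)
        · simpa [Fvec] using hk
        · exfalso
          split_ifs at hmem with ht
          · simp at hmem
          · exact hji (by simpa using hmem)
    · simp only [Finset.mem_filter, Finset.mem_univ, true_and, Finset.mem_union,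
        Finset.mem_map, Fvec, dif_neg h, Fin.castLEEmb, Function.Embedding.coeFn_mk]
      constructor
      · intro hF
        right
        have hji : j = i := by by_contra hne; have hF' := (Finset.mem_filter.1 hF).2; simp [hne, h] at hF'
        have ht : t ≠ 0 := by subst hji; simpa [h] using (Finset.mem_filter.1 hF).2
        simp [ht, hji]
      · rintro (⟨k, hk, rfl⟩ | hmem)
        · exact absurd (by simpa using (Fin.castLE hn k).isLt) h
        · split_ifs at hmem with ht
          · simp at hmem
          · have : j = i := by simpa using hmem
            exact Finset.mem_filter.2 ⟨Finset.mem_univ _, by simp [← this, h, ht]⟩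
  rw [hset, Finset.card_union_of_disjoint, Finset.card_map]
  · congr 1
    split_ifs <;> simp
  · rw [Finset.disjoint_left]
    intro a ha hb
    have h6 : (a : ℕ) < 6 := by
      obtain ⟨k, -, rfl⟩ := Finset.mem_map.1 ha
      simpa using (Fin.castLE hn k).isLt
    split_ifs at hb with ht
    · simp at hb
    · exact hi (by simpa [Finset.mem_singleton.1 hb] using h6)

def hd14 : Fin 14 → Fin 6 → ℤ :=
  ![![1,-1,0,0,0,0], ![0,1,-1,0,0,0], ![-1,0,1,0,0,0],
    ![0,0,0,1,-1,0], ![0,0,0,0,1,-1], ![0,0,0,-1,0,1],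
    ![1,1,1,0,0,0], ![1,-1,-1,0,0,0], ![-1,1,-1,0,0,0], ![-1,-1,1,0,0,0],
    ![0,0,0,1,1,1], ![0,0,0,1,-1,-1], ![0,0,0,-1,1,-1], ![0,0,0,-1,-1,1]]

def ts14 : Fin 14 → ℤ := ![1,1,1,-1,-1,-1,0,0,0,0,0,0,0,0]

def hdot (c c' : Fin 14) : ℤ := ∑ k : Fin 6, hd14 c k * hd14 c' k

lemma fact_entries : ∀ (c : Fin 14) (k : Fin 6),
    hd14 c k = -1 ∨ hd14 c k = 0 ∨ hd14 c k = 1 := by decide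

lemma fact_ts : ∀ c : Fin 14, ts14 c = -1 ∨ ts14 c = 0 ∨ ts14 c = 1 := by decide

lemma fact_card : ∀ c : Fin 14,
    (Finset.univ.filter fun k : Fin 6 => hd14 c k ≠ 0).card
      + (if ts14 c = 0 then 0 else 1) = 3 := by decide

lemma fact1 : ∀ c c' : Fin 14, c ≠ c' →
    hdot c c' ≠ 1 ∧ hdot c c' ≠ 3 ∧
    hdot c c' + ts14 c * ts14 c' ≠ 1 ∧ hdot c c' + ts14 c * ts14 c' ≠ 3 := by decide

lemma fact2 : ∀ c : Fin 14, (c : ℕ) < 6 → hdot c c = 2 := by decide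

lemma fact3 : ∀ c : Fin 14, hdot c c + ts14 c * ts14 c = 3 := by decide

/-- Index type for the independent set. -/
abbrev Ityp (n : ℕ) : Type := (Fin 6 × Fin (n - 6)) ⊕ Fin 8

/-- Which of the 14 head classes an index uses. -/
def cls {n : ℕ} : Ityp n → Fin 14
  | .inl (k, _) => ⟨k.1, by have := k.2; omega⟩
  | .inr e => ⟨6 + e.1, by have := e.2; omega⟩

/-- The tail coordinate of an index. -/
def tcd {n : ℕ} (hn : 7 ≤ n) : Ityp n → Fin n
  | .inl (_, m) => ⟨6 + m.1, by have := m.2; omega⟩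
  | .inr _ => ⟨6, by omega⟩

lemma tcd_not_lt {n : ℕ} (hn : 7 ≤ n) (x : Ityp n) : ¬ ((tcd hn x : ℕ) < 6) := by
  rcases x with ⟨k, m⟩ | e <;> simp [tcd]

/-- The vertex associated with an index. -/
def fV {n : ℕ} (hn : 7 ≤ n) (x : Ityp n) : Gvert n :=
  ⟨Fvec (hd14 (cls x)) (tcd hn x) (ts14 (cls x)), by
    constructor
    · intro j
      unfold Fvec
      split
      · exact fact_entries _ _
      · split
        · exact fact_ts _
        · right; left; rfl
    · rw [card_F _ _ (tcd_not_lt hn x)]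
      exact fact_card (cls x)⟩

lemma sdot_eq {n : ℕ} (hn : 7 ≤ n) (x y : Ityp n) :
    ∑ j, (fV hn x).1 j * (fV hn y).1 j
      = hdot (cls x) (cls y)
        + (if tcd hn x = tcd hn y then ts14 (cls x) * ts14 (cls y) else 0) :=
  dot_F _ _ _ _ (tcd_not_lt hn x) (tcd_not_lt hn y) _ _

lemma key {n : ℕ} (hn : 7 ≤ n) {x y : Ityp n} (hxy : x ≠ y) :
    (∑ j, (fV hn x).1 j * (fV hn y).1 j) ≠ 1 ∧
    (∑ j, (fV hn x).1 j * (fV hn y).1 j) ≠ 3 := by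
  rw [sdot_eq]
  rcases x with ⟨k, m⟩ | e <;> rcases y with ⟨k', m'⟩ | e'
  · by_cases hk : k = k'
    · subst hk
      have hm : m ≠ m' := fun h => hxy (by rw [h])
      have htc : tcd hn (.inl (k, m)) ≠ tcd hn (.inl (k, m')) := by
        simp only [tcd, ne_eq, Fin.mk.injEq]
        intro h
        exact hm (Fin.ext (by omega))
      rw [if_neg htc]
      simp only [cls]
      rw [fact2 ⟨k.1, by have := k.2; omega⟩ k.2]
      norm_num
    · have hc : cls (n := n) (.inl (k, m)) ≠ cls (n := n) (.inl (k', m')) := by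
        simp only [cls, ne_eq, Fin.mk.injEq]
        exact fun h => hk (Fin.ext h)
      obtain ⟨h1, h2, h3, h4⟩ := fact1 _ _ hc
      split_ifs
      · exact ⟨h3, h4⟩
      · simpa using ⟨h1, h2⟩
  · have hc : cls (n := n) (.inl (k, m)) ≠ cls (n := n) (.inr e') := by
      simp only [cls, ne_eq, Fin.mk.injEq]
      have := k.2; omega
    obtain ⟨h1, h2, h3, h4⟩ := fact1 _ _ hc
    split_ifs
    · exact ⟨h3, h4⟩
    · simpa using ⟨h1, h2⟩
  · have hc : cls (n := n) (.inr e) ≠ cls (n := n) (.inl (k', m')) := by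
      simp only [cls, ne_eq, Fin.mk.injEq]
      have := k'.2; omega
    obtain ⟨h1, h2, h3, h4⟩ := fact1 _ _ hc
    split_ifs
    · exact ⟨h3, h4⟩
    · simpa using ⟨h1, h2⟩
  · have he : e ≠ e' := fun h => hxy (by rw [h])
    have hc : cls (n := n) (.inr e) ≠ cls (n := n) (.inr e') := by
      simp only [cls, ne_eq, Fin.mk.injEq]
      exact fun h => he (Fin.ext (by omega))
    obtain ⟨h1, h2, h3, h4⟩ := fact1 _ _ hc
    split_ifs
    · exact ⟨h3, h4⟩
    · simpa using ⟨h1, h2⟩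

lemma fV_inj {n : ℕ} (hn : 7 ≤ n) : Function.Injective (fV hn) := by
  intro x y h
  by_contra hxy
  apply (key hn hxy).2
  rw [h, sdot_eq, if_pos rfl]
  exact fact3 _

/-- For all `n ≥ 7`, the independence number of `G_n` is at least `6n - 28`. -/
theorem alpha_ge_cobras (n : ℕ) (hn : 7 ≤ n) :
    ∃ S : Finset (Gvert n), IsIndep (G n) ↑S ∧ 6 * n - 28 ≤ S.card := by
  refine ⟨Finset.univ.map ⟨fV hn, fV_inj hn⟩, ?_, ?_⟩
  · intro u hu v hv huv hadj
    obtain ⟨x, -, rfl⟩ := Finset.mem_map.1 (Finset.mem_coe.1 hu)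
    obtain ⟨y, -, rfl⟩ := Finset.mem_map.1 (Finset.mem_coe.1 hv)
    have hxy : x ≠ y := fun h => huv (by simp [h])
    exact (key hn hxy).1 hadj.2
  · rw [Finset.card_map, Finset.card_univ]
    simp only [Fintype.card_sum, Fintype.card_prod, Fintype.card_fin]
    omega
end

section
/- Nagy's lemma: Let G'_n be the graph whose vertices are all vectors in {0,1}^n with exactly three coordinates equal to 1, with edges between pairs of vectors having scalar product 1. With c(n) = 0, 1, 2, 2 according to n ≡ 0, 1, 2, 3 (mod 4), the independence number of G'_n equals n − c(n). -/
/-- Vertices of Nagy's graph `G'_n`: vectors in `{0,1}^n` with exactly three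
coordinates equal to `1`. -/
def NagyVert (n : ℕ) : Type :=
  {v : Fin n → ℤ // (∀ i, v i = 0 ∨ v i = 1) ∧
    (Finset.univ.filter (fun i => v i ≠ 0)).card = 3}

/-- Nagy's graph `G'_n`: adjacency is scalar product `1`. -/
def NagyG (n : ℕ) : SimpleGraph (NagyVert n) where
  Adj u v := u ≠ v ∧ ∑ i, u.1 i * v.1 i = 1
  symm := by
    constructor
    rintro u v ⟨h1, h2⟩
    exact ⟨h1.symm, (Finset.sum_congr rfl fun i _ => mul_comm _ _).trans h2⟩
  loopless := by constructor; rintro u ⟨h1, -⟩; exact h1 rfl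

section NagyProof

variable {α : Type*} [DecidableEq α]

/-- two 2-subsets of a 3-set meet -/
lemma pair_meet {B P Q : Finset α} (hB : B.card = 3) (hP : P ⊆ B) (hQ : Q ⊆ B)
    (hPc : P.card = 2) (hQc : Q.card = 2) : (P ∩ Q).Nonempty := by
  rw [← Finset.card_pos]
  have h := Finset.card_union_add_card_inter P Q
  have h2 : (P ∪ Q).card ≤ 3 := hB ▸ Finset.card_le_card (Finset.union_subset hP hQ)
  omega

lemma inter_ne_zero {A B C : Finset α} (hA : A.card = 3)
    (h1 : (A ∩ B).card = 2) (h2 : (A ∩ C).card = 2) : (B ∩ C).card ≠ 0 := by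
  intro h0
  have := pair_meet hA (Finset.inter_subset_left (s₂ := B)) (Finset.inter_subset_left (s₂ := C)) h1 h2
  obtain ⟨x, hx⟩ := this
  simp only [Finset.mem_inter] at hx
  have : x ∈ B ∩ C := Finset.mem_inter.2 ⟨hx.1.2, hx.2.2⟩
  rw [Finset.card_eq_zero] at h0
  simp [h0] at this

open Finset in
lemma comp (C : Finset (Finset α)) (hne : C.Nonempty) (h3 : ∀ A ∈ C, A.card = 3)
    (h2 : ∀ A ∈ C, ∀ B ∈ C, A ≠ B → (A ∩ B).card = 2) :
    C.card + 2 ≤ (C.sup id).card ∨ (C.card = 3 ∧ (C.sup id).card = 4) ∨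
      (C.card = 4 ∧ (C.sup id).card = 4) := by
  classical
  obtain ⟨A, hA⟩ := hne
  have hAsup : A ⊆ C.sup id := le_sup (f := id) hA
  by_cases hone : ∀ D ∈ C, D = A
  · left
    have hC : C = {A} := by
      apply Finset.eq_singleton_iff_unique_mem.2 ⟨hA, hone⟩
    rw [hC]
    simp only [Finset.sup_singleton, id, Finset.card_singleton]
    rw [h3 A hA]
  · push_neg at hone
    obtain ⟨B, hB, hBA⟩ := hone
    set P := A ∩ B with hPdef
    have hP : P.card = 2 := h2 A hA B hB (Ne.symm hBA)
    have hPA : P ⊆ A := inter_subset_left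
    have hPB : P ⊆ B := inter_subset_right
    have hS : (A ∪ B).card = 4 := by
      have := card_union_add_card_inter A B
      rw [h3 A hA, h3 B hB, ← hPdef, hP] at this; omega
    have dich : ∀ D ∈ C, P ⊆ D ∨ D ⊆ A ∪ B := by
      intro D hD
      by_cases hDA : D = A
      · right; subst hDA; exact subset_union_left
      by_cases hDB : D = B
      · right; subst hDB; exact subset_union_right
      have hDAc := h2 D hD A hA hDA
      have hDBc := h2 D hD B hB hDB
      have heq : (D ∩ A) ∩ (D ∩ B) = D ∩ P := by ext x; simp [hPdef]; tauto
      have hsplit : (D ∩ (A ∪ B)).card + (D ∩ P).card = 4 := by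
        rw [Finset.inter_union_distrib_left]
        have h' := card_union_add_card_inter (D ∩ A) (D ∩ B)
        rw [heq, hDAc, hDBc] at h'; omega
      have hle3 : (D ∩ (A ∪ B)).card ≤ 3 := (h3 D hD) ▸ card_le_card inter_subset_left
      have hle2 : (D ∩ P).card ≤ 2 := hP ▸ card_le_card inter_subset_right
      by_cases hp2 : (D ∩ P).card = 2
      · left
        have : D ∩ P = P := eq_of_subset_of_card_le inter_subset_right (by omega)
        exact this ▸ inter_subset_left
      · right
        have : D ∩ (A ∪ B) = D :=
          eq_of_subset_of_card_le inter_subset_left (by rw [h3 D hD]; omega)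
        exact fun x hx => (Finset.mem_inter.1 (this ▸ hx)).2
    by_cases hall : ∀ D ∈ C, P ⊆ D
    · left
      have hPsup : P ⊆ C.sup id := hPA.trans hAsup
      have hmaps : ∀ X ∈ C, X \ P ∈ (C.sup id \ P).powersetCard 1 := by
        intro X hX
        rw [mem_powersetCard]
        constructor
        · exact sdiff_subset_sdiff (le_sup (f := id) hX) (le_refl _)
        · rw [card_sdiff_of_subset (hall X hX), h3 X hX, hP]
      have hinj : Set.InjOn (· \ P) ↑C := by
        intro X hX Y hY hXY
        have hX' : X \ P ∪ P = X := sdiff_union_of_subset (hall X hX)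
        have hY' : Y \ P ∪ P = Y := sdiff_union_of_subset (hall Y hY)
        have hXY' : X \ P = Y \ P := hXY
        rw [← hX', ← hY', hXY']
      have hcard := Finset.card_le_card_of_injOn _ hmaps hinj
      rw [card_powersetCard, Nat.choose_one_right, card_sdiff_of_subset hPsup, hP] at hcard
      have : 3 ≤ (C.sup id).card := (h3 A hA) ▸ card_le_card hAsup
      omega
    · push_neg at hall
      obtain ⟨C0, hC0, hPC0⟩ := hall
      have hC0S : C0 ⊆ A ∪ B := (dich C0 hC0).resolve_left hPC0
      have hC0A : C0 ≠ A := fun h => hPC0 (h ▸ hPA)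
      have hC0B : C0 ≠ B := fun h => hPC0 (h ▸ hPB)
      have hPC0card : (P ∩ C0).card = 1 := by
        have hle : (P ∩ C0).card ≤ 2 := hP ▸ card_le_card inter_subset_left
        have hne2 : (P ∩ C0).card ≠ 2 := by
          intro h
          exact hPC0 ((eq_of_subset_of_card_le (inter_subset_left : P ∩ C0 ⊆ P)
            (le_of_eq (hP.trans h.symm))) ▸ (inter_subset_right : P ∩ C0 ⊆ C0))
        have hun : (P ∪ C0).card ≤ 4 := hS ▸ card_le_card (union_subset (hPA.trans subset_union_left) hC0S)
        have := card_union_add_card_inter P C0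
        rw [hP, h3 C0 hC0] at this
        omega
      have hsub : ∀ D ∈ C, D ⊆ A ∪ B := by
        intro D hD
        rcases dich D hD with hPD | h
        swap
        · exact h
        by_cases hDC0 : D = C0
        · subst hDC0; exact hC0S
        have hDC0c : (D ∩ C0).card = 2 := h2 D hD C0 hC0 hDC0
        have hinterP : (D ∩ C0) ∩ P = P ∩ C0 := by
          ext x; simp only [mem_inter]
          constructor
          · rintro ⟨⟨_, h2'⟩, h3'⟩; exact ⟨h3', h2'⟩
          · rintro ⟨h1', h2'⟩; exact ⟨⟨hPD h1', h2'⟩, h1'⟩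
        have hy : ((D ∩ C0) \ P).Nonempty := by
          rw [← card_pos]
          have := card_sdiff_add_card_inter (D ∩ C0) P
          rw [hinterP, hPC0card, hDC0c] at this
          omega
        obtain ⟨y, hy⟩ := hy
        rw [mem_sdiff, mem_inter] at hy
        have hDP1 : (D \ P).card = 1 := by
          rw [card_sdiff_of_subset hPD, h3 D hD, hP]
        obtain ⟨e, he⟩ := Finset.card_eq_one.1 hDP1
        have hye : y = e := by
          have : y ∈ D \ P := mem_sdiff.2 ⟨hy.1.1, hy.2⟩
          rw [he, mem_singleton] at this; exact this
        intro x hx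
        by_cases hxP : x ∈ P
        · exact subset_union_left (hPA hxP)
        · have : x ∈ D \ P := mem_sdiff.2 ⟨hx, hxP⟩
          rw [he, mem_singleton] at this
          subst this
          exact hC0S (hye ▸ hy.1.2)
      have hsup : C.sup id = A ∪ B :=
        le_antisymm (Finset.sup_le fun D hD => hsub D hD)
          (union_subset hAsup (le_sup (f := id) hB))
      have hcle : C.card ≤ 4 := by
        have hss : C ⊆ (A ∪ B).powersetCard 3 := fun D hD =>
          mem_powersetCard.2 ⟨hsub D hD, h3 D hD⟩
        have := card_le_card hss
        rw [card_powersetCard, hS] at this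
        simpa using this
      have hcge : 3 ≤ C.card := by
        have hss : ({A, B, C0} : Finset (Finset α)) ⊆ C := by
          intro x hx
          simp only [mem_insert, mem_singleton] at hx
          rcases hx with h | h | h <;> subst h <;> assumption
        have : ({A, B, C0} : Finset (Finset α)).card = 3 := by
          rw [card_insert_of_notMem, card_insert_of_notMem, card_singleton]
          · simpa using (Ne.symm hC0B)
          · simp only [mem_insert, mem_singleton]
            push_neg
            exact ⟨Ne.symm hBA, Ne.symm hC0A⟩
        calc 3 = ({A, B, C0} : Finset (Finset α)).card := this.symm
        _ ≤ C.card := card_le_card hss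
      right
      have hsupc : (C.sup id).card = 4 := by rw [hsup, hS]
      rcases Nat.eq_or_lt_of_le hcge with h | h
      · exact Or.inl ⟨h.symm, hsupc⟩
      · exact Or.inr ⟨by omega, hsupc⟩

open Finset in
lemma main_ind (F : Finset (Finset α)) :
    (∀ A ∈ F, A.card = 3) →
    (∀ A ∈ F, ∀ B ∈ F, A ≠ B → (A ∩ B).card = 0 ∨ (A ∩ B).card = 2) →
    ∃ d, F.card + d ≤ (F.sup id).card ∧ (d = 0 → F.card % 4 = 0) ∧
      (d = 1 → F.card % 4 = 0 ∨ F.card % 4 = 3) := by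
  induction F using Finset.strongInduction with
  | _ F ih =>
  intro h3 hI
  rcases F.eq_empty_or_nonempty with rfl | ⟨A, hA⟩
  · exact ⟨0, by simp⟩
  have hA3 := h3 A hA
  set Cc := insert A (F.filter fun B => (A ∩ B).card = 2) with hCc
  have hCsub : Cc ⊆ F := insert_subset hA (filter_subset _ _)
  have hmemC : ∀ B, B ∈ Cc ↔ (B ∈ F ∧ (B = A ∨ (A ∩ B).card = 2)) := by
    intro B
    simp only [hCc, mem_insert, mem_filter]
    constructor
    · rintro (rfl | ⟨h1, h2⟩)
      · exact ⟨hA, Or.inl rfl⟩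
      · exact ⟨h1, Or.inr h2⟩
    · rintro ⟨h1, rfl | h2⟩
      · exact Or.inl rfl
      · exact Or.inr ⟨h1, h2⟩
  have hC2 : ∀ X ∈ Cc, ∀ Y ∈ Cc, X ≠ Y → (X ∩ Y).card = 2 := by
    intro X hX Y hY hXY
    obtain ⟨hXF, hX'⟩ := (hmemC X).1 hX
    obtain ⟨hYF, hY'⟩ := (hmemC Y).1 hY
    rcases hI X hXF Y hYF hXY with h0 | h
    swap
    · exact h
    exfalso
    rcases hX' with rfl | hX2
    · rcases hY' with rfl | hY2
      · exact hXY rfl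
      · rw [hY2] at h0; omega
    rcases hY' with rfl | hY2
    · rw [Finset.inter_comm] at h0; rw [h0] at hX2; omega
    · exact inter_ne_zero hA3 hX2 hY2 h0
  set F' := F \ Cc with hF'
  have hdisjXY : ∀ X ∈ F', ∀ Y ∈ Cc, X ∩ Y = ∅ := by
    intro X hX Y hY
    rw [hF', mem_sdiff] at hX
    obtain ⟨hXF, hXC⟩ := hX
    have hXA : X ≠ A := fun h => hXC ((hmemC X).2 ⟨hXF, Or.inl h⟩)
    have hAX0 : (A ∩ X).card = 0 := by
      rcases hI A hA X hXF (Ne.symm hXA) with h | h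
      · exact h
      · exact absurd ((hmemC X).2 ⟨hXF, Or.inr h⟩) hXC
    obtain ⟨hYF, hY'⟩ := (hmemC Y).1 hY
    rcases hY' with rfl | hY2
    · rw [← Finset.card_eq_zero, Finset.inter_comm]; exact hAX0
    · have hXY : X ≠ Y := fun h => hXC (h ▸ hY)
      rw [← Finset.card_eq_zero]
      rcases hI X hXF Y hYF hXY with h | h
      · exact h
      · exfalso
        have hmeet := pair_meet (h3 Y hYF) (inter_subset_right : A ∩ Y ⊆ Y)
          (inter_subset_right : X ∩ Y ⊆ Y) hY2 h
        obtain ⟨x, hx⟩ := hmeet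
        simp only [mem_inter] at hx
        have : x ∈ A ∩ X := mem_inter.2 ⟨hx.1.1, hx.2.1⟩
        rw [Finset.card_eq_zero] at hAX0
        simp [hAX0] at this
  have hsupdisj : Disjoint (F'.sup id) (Cc.sup id) := by
    rw [Finset.disjoint_left]
    intro x hx hx'
    rw [Finset.mem_sup] at hx hx'
    obtain ⟨X, hX, hxX⟩ := hx
    obtain ⟨Y, hY, hxY⟩ := hx'
    have := hdisjXY X hX Y hY
    have : x ∈ X ∩ Y := mem_inter.2 ⟨hxX, hxY⟩
    simp_all
  have hsupun : F.sup id = F'.sup id ∪ Cc.sup id := by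
    conv_lhs => rw [← sdiff_union_of_subset hCsub]
    rw [Finset.sup_union]
    rfl
  have hcards : (F.sup id).card = (F'.sup id).card + (Cc.sup id).card := by
    rw [hsupun, card_union_of_disjoint hsupdisj]
  have hFcard : F.card = F'.card + Cc.card := by
    have h1 := card_sdiff_of_subset hCsub
    rw [← hF'] at h1
    have h2 := card_le_card hCsub
    omega
  have hss : F' ⊂ F := by
    rw [Finset.ssubset_iff_of_subset sdiff_subset]
    exact ⟨A, hA, fun h => (mem_sdiff.1 h).2 (mem_insert_self _ _)⟩
  obtain ⟨d', hd1, hd2, hd3⟩ := ih F' hss (fun X hX => h3 X (sdiff_subset hX))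
    (fun X hX Y hY => hI X (sdiff_subset hX) Y (sdiff_subset hY))
  have hCne : Cc.Nonempty := ⟨A, mem_insert_self _ _⟩
  rcases comp Cc hCne (fun X hX => h3 X (hCsub hX)) hC2 with h | ⟨hc, hu⟩ | ⟨hc, hu⟩
  · exact ⟨d' + 2, by omega, by omega, by omega⟩
  · refine ⟨d' + 1, by omega, by omega, ?_⟩
    intro h1
    have hd'0 : d' = 0 := by omega
    have := hd2 hd'0
    omega
  · refine ⟨d', by omega, ?_, ?_⟩
    · intro h0; have := hd2 h0; omega
    · intro h1; have := hd3 h1; omega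


open Finset in
lemma upper (n : ℕ) (F : Finset (Finset (Fin n))) (h3 : ∀ A ∈ F, A.card = 3)
    (hI : ∀ A ∈ F, ∀ B ∈ F, A ≠ B → (A ∩ B).card = 0 ∨ (A ∩ B).card = 2) :
    F.card ≤ n - c n := by
  obtain ⟨d, h1, h2, h3'⟩ := main_ind F h3 hI
  have hsup : (F.sup id).card ≤ n := by
    have := card_le_card (subset_univ (F.sup id))
    simpa using this
  unfold c
  rcases Nat.lt_or_ge d 2 with hd | hd
  · interval_cases d
    · have := h2 rfl
      split_ifs <;> omega
    · rcases h3' rfl with h | h <;> (split_ifs <;> omega)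
  · split_ifs <;> omega

open Finset in
lemma card_filter_Ico {n : ℕ} (a b : ℕ) (h : b ≤ n) :
    ((univ : Finset (Fin n)).filter fun y : Fin n => a ≤ (y : ℕ) ∧ (y : ℕ) < b).card = b - a := by
  have himg : (((univ : Finset (Fin n)).filter fun y : Fin n => a ≤ (y : ℕ) ∧ (y : ℕ) < b).image
      Fin.val) = Finset.Ico a b := by
    ext m
    simp only [Finset.mem_image, Finset.mem_filter, Finset.mem_univ, true_and, Finset.mem_Ico]
    constructor
    · rintro ⟨x, hx, rfl⟩; exact hx
    · rintro ⟨h1, h2⟩; exact ⟨⟨m, lt_of_lt_of_le h2 h⟩, ⟨h1, h2⟩, rfl⟩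
  have := Finset.card_image_of_injective
    ((univ : Finset (Fin n)).filter fun y : Fin n => a ≤ (y : ℕ) ∧ (y : ℕ) < b) Fin.val_injective
  rw [himg, Nat.card_Ico] at this
  omega

open Finset in
lemma card_filter_Ico_le {n : ℕ} (a b : ℕ) :
    ((univ : Finset (Fin n)).filter fun y : Fin n => a ≤ (y : ℕ) ∧ (y : ℕ) < b).card ≤ b - a := by
  have := Finset.card_le_card_of_injOn
    (s := (univ : Finset (Fin n)).filter fun y : Fin n => a ≤ (y : ℕ) ∧ (y : ℕ) < b)
    (t := Finset.Ico a b) Fin.val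
    (fun x hx => by simp only [mem_coe, mem_filter] at hx; simp [Finset.mem_Ico, hx.2.1, hx.2.2])
    (fun x _ y _ hxy => Fin.val_injective hxy)
  rwa [Nat.card_Ico] at this

open Finset

def bset (n j : ℕ) : Finset (Fin n) :=
  Finset.univ.filter fun y : Fin n => 4*j ≤ (y : ℕ) ∧ (y : ℕ) < 4*j+4

def psi {n : ℕ} (x : Fin n) : Finset (Fin n) := (bset n ((x : ℕ)/4)).erase x

def DD (n : ℕ) : Finset (Fin n) :=
  Finset.univ.filter fun x : Fin n => 0 ≤ (x : ℕ) ∧ (x : ℕ) < 4*(n/4)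

def Fam (n : ℕ) : Finset (Finset (Fin n)) :=
  if n % 4 = 3 then insert (bset n (n/4)) ((DD n).image psi) else (DD n).image psi

lemma mem_bset {n j : ℕ} {y : Fin n} : y ∈ bset n j ↔ 4*j ≤ (y : ℕ) ∧ (y : ℕ) < 4*j+4 := by
  simp [bset]

lemma card_bset_le {n j : ℕ} : (bset n j).card ≤ 4 := by
  have := card_filter_Ico_le (n := n) (4*j) (4*j+4)
  rw [bset]
  omega

lemma card_psi {n : ℕ} {x : Fin n} (hx : x ∈ DD n) : (psi x).card = 3 := by
  simp only [DD, mem_filter] at hx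
  have hxn : (x : ℕ) < n := x.isLt
  have hb : (bset n ((x : ℕ)/4)).card = 4 := by
    rw [bset, card_filter_Ico _ _ (by omega)]
    omega
  have hxb : x ∈ bset n ((x : ℕ)/4) := mem_bset.2 (by omega)
  rw [psi, card_erase_of_mem hxb, hb]

lemma psi_subset {n : ℕ} (x : Fin n) : psi x ⊆ bset n ((x : ℕ)/4) := erase_subset _ _

lemma fam_struct {n : ℕ} {A : Finset (Fin n)} (hA : A ∈ Fam n) :
    ∃ j, A ⊆ bset n j ∧ A.card = 3 := by
  rw [Fam] at hA
  have himg : A ∈ (DD n).image psi → ∃ j, A ⊆ bset n j ∧ A.card = 3 := by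
    intro h
    obtain ⟨x, hx, rfl⟩ := mem_image.1 h
    exact ⟨(x : ℕ)/4, psi_subset x, card_psi hx⟩
  split_ifs at hA with h3
  · rcases mem_insert.1 hA with rfl | h
    · refine ⟨n/4, subset_rfl, ?_⟩
      have hcong : bset n (n/4) =
          Finset.univ.filter fun y : Fin n => 4*(n/4) ≤ (y : ℕ) ∧ (y : ℕ) < n := by
        ext y
        have hy := y.isLt
        simp only [bset, mem_filter, mem_univ, true_and]
        omega
      rw [hcong, card_filter_Ico _ _ (le_refl n)]
      omega
    · exact himg h
  · exact himg hA

lemma fam_card3 {n : ℕ} : ∀ A ∈ Fam n, A.card = 3 := by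
  intro A hA
  obtain ⟨j, _, h⟩ := fam_struct hA
  exact h

lemma fam_indep {n : ℕ} : ∀ A ∈ Fam n, ∀ B ∈ Fam n, A ≠ B →
    (A ∩ B).card = 0 ∨ (A ∩ B).card = 2 := by
  intro A hA B hB hAB
  obtain ⟨j, hAj, hA3⟩ := fam_struct hA
  obtain ⟨j', hBj, hB3⟩ := fam_struct hB
  by_cases hjj : j = j'
  · subst hjj
    right
    have hun : (A ∪ B).card ≤ 4 :=
      le_trans (card_le_card (union_subset hAj hBj)) card_bset_le
    have hie := card_union_add_card_inter A B
    have hle : (A ∩ B).card ≤ 3 := hA3 ▸ card_le_card inter_subset_left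
    have hne3 : (A ∩ B).card ≠ 3 := by
      intro h
      have h1 : A ∩ B = A := eq_of_subset_of_card_le inter_subset_left (by omega)
      have h2 : A ∩ B = B := eq_of_subset_of_card_le inter_subset_right (by omega)
      exact hAB (h1.symm.trans h2)
    omega
  · left
    rw [card_eq_zero, eq_empty_iff_forall_notMem]
    intro x hx
    rw [mem_inter] at hx
    have h1 := mem_bset.1 (hAj hx.1)
    have h2 := mem_bset.1 (hBj hx.2)
    omega

lemma fam_card {n : ℕ} : n - c n ≤ (Fam n).card := by
  have hD : (DD n).card = 4*(n/4) := by
    rw [DD, card_filter_Ico _ _ (by omega)]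
    omega
  have hinj : Set.InjOn psi ((DD n : Finset (Fin n)) : Set (Fin n)) := by
    intro x hx x' hx' hpsi
    by_contra hne
    have h3 : (psi x).card = 3 := card_psi hx
    have hnonempty : (psi x).Nonempty := by rw [← card_pos, h3]; omega
    obtain ⟨y, hy⟩ := hnonempty
    have hy' : y ∈ psi x' := hpsi ▸ hy
    have hb1 := mem_bset.1 (psi_subset x hy)
    have hb2 := mem_bset.1 (psi_subset x' hy')
    have hj : (x : ℕ)/4 = (x' : ℕ)/4 := by omega
    simp only [DD, mem_filter, mem_coe] at hx hx'
    have hx'b : x' ∈ bset n ((x : ℕ)/4) := mem_bset.2 (by omega)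
    have : x' ∈ psi x := by
      rw [psi, mem_erase]
      exact ⟨fun h => hne (Fin.val_injective (by rw [h])), hx'b⟩
    rw [hpsi, psi, mem_erase] at this
    exact this.1 rfl
  have himg : ((DD n).image psi).card = 4*(n/4) := by
    rw [Finset.card_image_of_injOn hinj, hD]
  rw [Fam]
  split_ifs with h3
  · have htail : bset n (n/4) ∉ (DD n).image psi := by
      intro h
      obtain ⟨x, hx, hpsi⟩ := mem_image.1 h
      have hyb : (⟨4*(n/4), by omega⟩ : Fin n) ∈ bset n (n/4) := mem_bset.2 (⟨le_rfl, by omega⟩)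
      rw [← hpsi] at hyb
      have := mem_bset.1 (psi_subset x hyb)
      simp only [DD, mem_filter, mem_coe] at hx
      simp only at this
      omega
    rw [card_insert_of_notMem htail, himg]
    unfold c
    split_ifs <;> omega
  · rw [himg]
    unfold c
    split_ifs <;> omega


def suppv {n : ℕ} (u : NagyVert n) : Finset (Fin n) :=
  Finset.univ.filter fun i => u.1 i ≠ 0

lemma suppv_card {n : ℕ} (u : NagyVert n) : (suppv u).card = 3 := u.2.2

lemma val_eq_ite {n : ℕ} (u : NagyVert n) (i : Fin n) :
    u.1 i = if i ∈ suppv u then 1 else 0 := by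
  rcases u.2.1 i with h | h
  · simp [suppv, h]
  · simp only [suppv, mem_filter, mem_univ, true_and, h]
    norm_num

lemma suppv_inj {n : ℕ} : Function.Injective (suppv (n := n)) := by
  intro u v h
  apply Subtype.ext
  funext i
  rw [val_eq_ite u i, val_eq_ite v i, h]

lemma dot_eq {n : ℕ} (u v : NagyVert n) :
    (∑ i, u.1 i * v.1 i) = ((suppv u ∩ suppv v).card : ℤ) := by
  have hterm : ∀ i, u.1 i * v.1 i = if i ∈ suppv u ∩ suppv v then 1 else 0 := by
    intro i
    rw [val_eq_ite u i, val_eq_ite v i]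
    by_cases h1 : i ∈ suppv u <;> by_cases h2 : i ∈ suppv v <;> simp [h1, h2]
  rw [Finset.sum_congr rfl fun i _ => hterm i, Finset.sum_boole]
  norm_cast
  apply Finset.card_nbij id (fun x hx => by simpa using hx) (fun x _ y _ h => h)
    (fun x hx => ⟨x, by simpa using hx, rfl⟩)

def vertOf {n : ℕ} (T : Finset (Fin n)) (hT : T.card = 3) : NagyVert n :=
  ⟨fun i => if i ∈ T then 1 else 0, fun i => by by_cases h : i ∈ T <;> simp [h], by
    have hT' : (Finset.univ.filter fun i => (if i ∈ T then (1 : ℤ) else 0) ≠ 0) = T := by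
      ext i
      by_cases h : i ∈ T <;> simp [h]
    rw [hT']
    exact hT⟩

lemma suppv_vertOf {n : ℕ} (T : Finset (Fin n)) (hT : T.card = 3) :
    suppv (vertOf T hT) = T := by
  ext i
  by_cases h : i ∈ T <;> simp [suppv, vertOf, h]

/-- Nagy's lemma: `α(G'_n) = n - c(n)`. -/
theorem nagy_lemma (n : ℕ) :
    IsGreatest {k | ∃ S : Finset (NagyVert n), IsIndep (NagyG n) ↑S ∧ S.card = k}
      (n - c n) := by
  classical
  constructor
  · obtain ⟨Fam', hsub, hcard⟩ := Finset.exists_subset_card_eq (fam_card (n := n))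
    refine ⟨(Fam'.attach).image (fun T => vertOf T.1 (fam_card3 T.1 (hsub T.2))), ?_, ?_⟩
    · intro u hu v hv huv
      simp only [coe_image, Set.mem_image, mem_coe, mem_attach] at hu hv
      obtain ⟨⟨T, hT⟩, -, rfl⟩ := hu
      obtain ⟨⟨T', hT'⟩, -, rfl⟩ := hv
      rintro ⟨-, hdot⟩
      rw [dot_eq, suppv_vertOf, suppv_vertOf] at hdot
      have hTT : T ≠ T' := by
        intro h
        subst h
        exact huv rfl
      rcases fam_indep T (hsub hT) T' (hsub hT') hTT with h | h <;>
        rw [h] at hdot <;> norm_num at hdot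
    · rw [Finset.card_image_of_injOn, card_attach, hcard]
      intro x _ y _ hxy
      have h := congrArg suppv hxy
      rw [suppv_vertOf, suppv_vertOf] at h
      exact Subtype.ext h
  · rintro k ⟨S, hind, rfl⟩
    have h3 : ∀ A ∈ S.image suppv, A.card = 3 := by
      intro A hA
      obtain ⟨u, _, rfl⟩ := mem_image.1 hA
      exact suppv_card u
    have hI : ∀ A ∈ S.image suppv, ∀ B ∈ S.image suppv, A ≠ B →
        (A ∩ B).card = 0 ∨ (A ∩ B).card = 2 := by
      intro A hA B hB hAB
      obtain ⟨u, hu, rfl⟩ := mem_image.1 hA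
      obtain ⟨v, hv, rfl⟩ := mem_image.1 hB
      have huv : u ≠ v := fun h => hAB (by rw [h])
      have hnadj := hind (mem_coe.2 hu) (mem_coe.2 hv) huv
      have hdot : ¬ ((∑ i, u.1 i * v.1 i) = 1) := fun h => hnadj ⟨huv, h⟩
      rw [dot_eq] at hdot
      have h1 : (suppv u ∩ suppv v).card ≠ 1 := fun h => hdot (by rw [h]; norm_num)
      have hle : (suppv u ∩ suppv v).card ≤ 3 :=
        (suppv_card u) ▸ card_le_card inter_subset_left
      have hne3 : (suppv u ∩ suppv v).card ≠ 3 := by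
        intro h
        have e1 : suppv u ∩ suppv v = suppv u :=
          eq_of_subset_of_card_le inter_subset_left (by rw [suppv_card, h])
        have e2 : suppv u ∩ suppv v = suppv v :=
          eq_of_subset_of_card_le inter_subset_right (by rw [suppv_card, h])
        exact huv (suppv_inj (e1.symm.trans e2))
      omega
    have key := upper n (S.image suppv) h3 hI
    rwa [Finset.card_image_of_injective S suppv_inj] at key

end NagyProof
end

section
/- A family of 3-element subsets of {1,…,n} in which no two sets intersect in exactly one element, viewed as the independent sets of the Nagy graph G'_n, has size at most n when n ≡ 0 (mod 4); more precisely at most n − c(n) with c(n) as defined. -/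
set_option maxHeartbeats 1000000


namespace NagyAux

variable {α : Type*} [DecidableEq α]


lemma inter_card_lt {s t : Finset α} (hs : s.card = 3) (ht : t.card = 3)
    (hne : s ≠ t) : (s ∩ t).card < 3 := by
  by_contra h
  push_neg at h
  have h1 : s ∩ t = s := Finset.eq_of_subset_of_card_le (Finset.inter_subset_left) (by omega)
  have h2 : s ⊆ t := by rw [← h1]; exact Finset.inter_subset_right
  exact hne (Finset.eq_of_subset_of_card_le h2 (by omega))

lemma trans_aux {s t u : Finset α} (ht : t.card = 3)
    (hst : (s ∩ t).card = 2) (htu : (t ∩ u).card = 2) (hsu : s ∩ u = ∅) : False := by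
  have hdisj : Disjoint (s ∩ t) (t ∩ u) := by
    rw [Finset.disjoint_left]
    intro x hx1 hx2
    have : x ∈ s ∩ u := Finset.mem_inter.mpr
      ⟨(Finset.mem_inter.mp hx1).1, (Finset.mem_inter.mp hx2).2⟩
    simp [hsu] at this
  have hsubset : (s ∩ t) ∪ (t ∩ u) ⊆ t := by
    intro x hx
    rcases Finset.mem_union.mp hx with h | h
    · exact (Finset.mem_inter.mp h).2
    · exact (Finset.mem_inter.mp h).1
  have := Finset.card_le_card hsubset
  rw [Finset.card_union_of_disjoint hdisj, hst, htu, ht] at this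
  omega

lemma third {v : Finset α} (hv : v.card = 3) {a b : α} (ha : a ∈ v) (hb : b ∈ v)
    (hab : a ≠ b) :
    ∃ e ∈ v, e ≠ a ∧ e ≠ b ∧ ∀ x ∈ v, x = a ∨ x = b ∨ x = e := by
  have hsub : ({a, b} : Finset α) ⊆ v := by
    intro x hx; simp only [Finset.mem_insert, Finset.mem_singleton] at hx
    rcases hx with rfl | rfl <;> assumption
  have hcab : ({a, b} : Finset α).card = 2 := by
    rw [Finset.card_insert_of_notMem (by simpa using hab), Finset.card_singleton]
  have h1 : (v \ {a, b}).card = 1 := by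
    rw [Finset.card_sdiff_of_subset hsub, hv, hcab]
  obtain ⟨e, he⟩ := Finset.card_eq_one.mp h1
  have hev : e ∈ v \ ({a, b} : Finset α) := he ▸ Finset.mem_singleton_self e
  rw [Finset.mem_sdiff] at hev
  refine ⟨e, hev.1, ?_, ?_, ?_⟩
  · intro h; exact hev.2 (by simp [h])
  · intro h; exact hev.2 (by simp [h])
  · intro x hx
    by_cases hxab : x ∈ ({a, b} : Finset α)
    · simp only [Finset.mem_insert, Finset.mem_singleton] at hxab; tauto
    · have : x ∈ v \ ({a, b} : Finset α) := Finset.mem_sdiff.mpr ⟨hx, hxab⟩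
      rw [he, Finset.mem_singleton] at this; tauto

lemma step1 {s u : Finset α} {a b c : α}
    (hall : ∀ x ∈ s, x = a ∨ x = b ∨ x = c)
    (hbc : b ≠ c)
    (hna : a ∉ u) (h2 : (u ∩ s).card = 2) : b ∈ u ∧ c ∈ u := by
  have hsub : u ∩ s ⊆ ({b, c} : Finset α) := by
    intro x hx
    rw [Finset.mem_inter] at hx
    rcases hall x hx.2 with rfl | rfl | rfl
    · exact absurd hx.1 hna
    · simp
    · simp
  have hcard : ({b, c} : Finset α).card ≤ (u ∩ s).card := by
    rw [h2, Finset.card_insert_of_notMem (by simpa using hbc), Finset.card_singleton]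
  have heq : u ∩ s = ({b, c} : Finset α) :=
    Finset.eq_of_subset_of_card_le hsub hcard
  constructor
  · have : b ∈ u ∩ s := heq ▸ (by simp : b ∈ ({b, c} : Finset α))
    exact (Finset.mem_inter.mp this).1
  · have : c ∈ u ∩ s := heq ▸ (by simp : c ∈ ({b, c} : Finset α))
    exact (Finset.mem_inter.mp this).1

/-- Structure of one "class": all pairs intersect in exactly 2 elements. -/
lemma class_lemma (C : Finset (Finset α)) (hne : C.Nonempty)
    (h3 : ∀ s ∈ C, s.card = 3)
    (h2 : ∀ s ∈ C, ∀ t ∈ C, s ≠ t → (s ∩ t).card = 2) :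
    C.card ≤ (C.biUnion id).card ∧
      ((C.biUnion id).card ≤ C.card + 1 → (C.biUnion id).card = 4) := by
  classical
  obtain ⟨s, hs⟩ := hne
  by_cases hone : ∀ t ∈ C, t = s
  · -- C = {s}
    have hCs : C = {s} := by
      apply Finset.eq_singleton_iff_unique_mem.mpr ⟨hs, hone⟩
    have hV : ({s} : Finset (Finset α)).biUnion id = s := by simp
    rw [hCs, hV, Finset.card_singleton, h3 s hs]
    omega
  · push_neg at hone
    obtain ⟨t, ht, hts⟩ := hone
    have hst2 : (s ∩ t).card = 2 := h2 s hs t ht (Ne.symm hts)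
    obtain ⟨a, b, hab, hWeq⟩ := Finset.card_eq_two.mp hst2
    have has : a ∈ s := (Finset.mem_inter.mp (hWeq ▸ (by simp : a ∈ ({a,b} : Finset α)))).1
    have hat : a ∈ t := (Finset.mem_inter.mp (hWeq ▸ (by simp : a ∈ ({a,b} : Finset α)))).2
    have hbs : b ∈ s := (Finset.mem_inter.mp (hWeq ▸ (by simp : b ∈ ({a,b} : Finset α)))).1
    have hbt : b ∈ t := (Finset.mem_inter.mp (hWeq ▸ (by simp : b ∈ ({a,b} : Finset α)))).2
    obtain ⟨c, hcs, hca, hcb, halls⟩ := third (h3 s hs) has hbs hab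
    obtain ⟨d, hdt, hda, hdb, hallt⟩ := third (h3 t ht) hat hbt hab
    have hct : c ∉ t := by
      intro hct
      have : c ∈ s ∩ t := Finset.mem_inter.mpr ⟨hcs, hct⟩
      rw [hWeq] at this
      simp only [Finset.mem_insert, Finset.mem_singleton] at this
      tauto
    have hds : d ∉ s := by
      intro hds
      have : d ∈ s ∩ t := Finset.mem_inter.mpr ⟨hds, hdt⟩
      rw [hWeq] at this
      simp only [Finset.mem_insert, Finset.mem_singleton] at this
      tauto
    have hcd : c ≠ d := fun h => hct (h ▸ hdt)
    by_cases hsun : ∀ u ∈ C, a ∈ u ∧ b ∈ u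
    · -- sunflower case: each set contributes a private third element
      set W : Finset α := C.biUnion (fun u => u \ {a, b}) with hW
      have hpair : ∀ u ∈ C, ({a, b} : Finset α) ⊆ u := by
        intro u hu x hx
        simp only [Finset.mem_insert, Finset.mem_singleton] at hx
        rcases hx with rfl | rfl
        · exact (hsun u hu).1
        · exact (hsun u hu).2
      have hcab : ({a, b} : Finset α).card = 2 := by
        rw [Finset.card_insert_of_notMem (by simpa using hab), Finset.card_singleton]
      have hWcard : W.card = C.card := by
        rw [hW, Finset.card_biUnion]
        · rw [Finset.sum_congr rfl (fun u hu => by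
            rw [Finset.card_sdiff_of_subset (hpair u hu), h3 u hu, hcab])]
          simp
        · intro u hu u' hu' huu'
          have hint : u ∩ u' = ({a, b} : Finset α) := by
            refine (Finset.eq_of_subset_of_card_le ?_ ?_).symm
            · intro x hx
              simp only [Finset.mem_insert, Finset.mem_singleton] at hx
              rcases hx with rfl | rfl
              · exact Finset.mem_inter.mpr ⟨(hsun u hu).1, (hsun u' hu').1⟩
              · exact Finset.mem_inter.mpr ⟨(hsun u hu).2, (hsun u' hu').2⟩
            · rw [h2 u hu u' hu' huu', hcab]
          rw [Function.onFun, Finset.disjoint_left]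
          intro x hx hx'
          rw [Finset.mem_sdiff] at hx hx'
          have : x ∈ u ∩ u' := Finset.mem_inter.mpr ⟨hx.1, hx'.1⟩
          rw [hint] at this
          exact hx.2 this
      have hdisjW : Disjoint ({a, b} : Finset α) W := by
        rw [Finset.disjoint_left]
        intro x hx hxW
        rw [hW, Finset.mem_biUnion] at hxW
        obtain ⟨u, hu, hxu⟩ := hxW
        exact (Finset.mem_sdiff.mp hxu).2 hx
      have hsubV : ({a, b} : Finset α) ∪ W ⊆ C.biUnion id := by
        intro x hx
        rcases Finset.mem_union.mp hx with hx | hx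
        · refine Finset.mem_biUnion.mpr ⟨s, hs, ?_⟩
          simp only [Finset.mem_insert, Finset.mem_singleton] at hx
          rcases hx with rfl | rfl
          · exact has
          · exact hbs
        · rw [hW, Finset.mem_biUnion] at hx
          obtain ⟨u, hu, hxu⟩ := hx
          exact Finset.mem_biUnion.mpr ⟨u, hu, (Finset.mem_sdiff.mp hxu).1⟩
      have hge : C.card + 2 ≤ (C.biUnion id).card := by
        have := Finset.card_le_card hsubV
        rw [Finset.card_union_of_disjoint hdisjW, hcab, hWcard] at this
        omega
      exact ⟨by omega, fun h => absurd h (by omega)⟩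
    · -- the 4-element case
      push_neg at hsun
      obtain ⟨u, hu, hnu0⟩ := hsun
      have hnu : ¬(a ∈ u ∧ b ∈ u) := fun h => hnu0 h.1 h.2
      set Ω : Finset α := {a, b, c, d} with hΩ
      have haΩ : a ∈ Ω := by simp [hΩ]
      have hbΩ : b ∈ Ω := by simp [hΩ]
      have hcΩ : c ∈ Ω := by simp [hΩ]
      have hdΩ : d ∈ Ω := by simp [hΩ]
      have hΩcard : Ω.card = 4 := by
        rw [hΩ]
        rw [Finset.card_insert_of_notMem (by simp [hab, Ne.symm hca, Ne.symm hda]),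
          Finset.card_insert_of_notMem (by simp [Ne.symm hcb, Ne.symm hdb]),
          Finset.card_insert_of_notMem (by simp [hcd]), Finset.card_singleton]
      -- any member avoiding {a,b} as a subset equals {b,c,d} or {a,c,d}
      have harg : ∀ v ∈ C, ¬(a ∈ v ∧ b ∈ v) → c ∈ v ∧ d ∈ v ∧ v ⊆ Ω := by
        intro v hv hnv
        have hvs : v ≠ s := by rintro rfl; exact hnv ⟨has, hbs⟩
        have hvt : v ≠ t := by rintro rfl; exact hnv ⟨hat, hbt⟩
        have h2s : (v ∩ s).card = 2 := h2 v hv s hs hvs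
        have h2t : (v ∩ t).card = 2 := h2 v hv t ht hvt
        have halls' : ∀ x ∈ s, x = b ∨ x = a ∨ x = c := by
          intro x hx; rcases halls x hx with h|h|h <;> tauto
        have hallt' : ∀ x ∈ t, x = b ∨ x = a ∨ x = d := by
          intro x hx; rcases hallt x hx with h|h|h <;> tauto
        by_cases hav : a ∈ v
        · have hbv : b ∉ v := fun h => hnv ⟨hav, h⟩
          have h1 := step1 halls' (Ne.symm hca) hbv h2s
          have h2' := step1 hallt' (Ne.symm hda) hbv h2t
          refine ⟨h1.2, h2'.2, ?_⟩
          have hsub : ({a, c, d} : Finset α) ⊆ v := by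
            intro x hx
            simp only [Finset.mem_insert, Finset.mem_singleton] at hx
            rcases hx with rfl | rfl | rfl
            · exact hav
            · exact h1.2
            · exact h2'.2
          have hacd : ({a, c, d} : Finset α).card = 3 := by
            rw [Finset.card_insert_of_notMem (by simp [Ne.symm hca, Ne.symm hda]),
              Finset.card_insert_of_notMem (by simp [hcd]), Finset.card_singleton]
          have heq : ({a, c, d} : Finset α) = v :=
            Finset.eq_of_subset_of_card_le hsub (by rw [h3 v hv, hacd])
          rw [← heq]
          intro x hx
          simp only [Finset.mem_insert, Finset.mem_singleton] at hx
          rcases hx with rfl | rfl | rfl <;> assumption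
        · have h1 := step1 halls (Ne.symm hcb) hav h2s
          have h2' := step1 hallt (Ne.symm hdb) hav h2t
          refine ⟨h1.2, h2'.2, ?_⟩
          have hsub : ({b, c, d} : Finset α) ⊆ v := by
            intro x hx
            simp only [Finset.mem_insert, Finset.mem_singleton] at hx
            rcases hx with rfl | rfl | rfl
            · exact h1.1
            · exact h1.2
            · exact h2'.2
          have hbcd : ({b, c, d} : Finset α).card = 3 := by
            rw [Finset.card_insert_of_notMem (by simp [Ne.symm hcb, Ne.symm hdb]),
              Finset.card_insert_of_notMem (by simp [hcd]), Finset.card_singleton]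
          have heq : ({b, c, d} : Finset α) = v :=
            Finset.eq_of_subset_of_card_le hsub (by rw [h3 v hv, hbcd])
          rw [← heq]
          intro x hx
          simp only [Finset.mem_insert, Finset.mem_singleton] at hx
          rcases hx with rfl | rfl | rfl <;> assumption
      have hnuv := harg u hu hnu
      have hkey : ∀ v ∈ C, v ⊆ Ω := by
        intro v hv
        by_cases hvab : a ∈ v ∧ b ∈ v
        · have hvu : v ≠ u := by rintro rfl; exact hnu hvab
          obtain ⟨e, hev, hea, heb, hallv⟩ := third (h3 v hv) hvab.1 hvab.2 hab
          have h2vu : (v ∩ u).card = 2 := h2 v hv u hu hvu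
          have heΩ : e ∈ Ω := by
            by_contra heΩ
            have heu : e ∉ u := fun h => heΩ (hnuv.2.2 h)
            have habu : a ∉ u ∨ b ∉ u := by
              by_cases h : a ∈ u
              · exact Or.inr (fun hb' => hnu ⟨h, hb'⟩)
              · exact Or.inl h
            have hcard1 : (v ∩ u).card ≤ 1 := by
              rcases habu with hn | hn
              · have hss : v ∩ u ⊆ ({b} : Finset α) := by
                  intro x hx
                  rw [Finset.mem_inter] at hx
                  rcases hallv x hx.1 with rfl | rfl | rfl
                  · exact absurd hx.2 hn
                  · simp
                  · exact absurd hx.2 heu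
                simpa using Finset.card_le_card hss
              · have hss : v ∩ u ⊆ ({a} : Finset α) := by
                  intro x hx
                  rw [Finset.mem_inter] at hx
                  rcases hallv x hx.1 with rfl | rfl | rfl
                  · simp
                  · exact absurd hx.2 hn
                  · exact absurd hx.2 heu
                simpa using Finset.card_le_card hss
            omega
          intro x hx
          rcases hallv x hx with rfl | rfl | rfl
          · exact haΩ
          · exact hbΩ
          · exact heΩ
        · exact (harg v hv hvab).2.2
      have hVeq : C.biUnion id = Ω := by
        apply Finset.Subset.antisymm
        · intro x hx
          obtain ⟨v, hv, hxv⟩ := Finset.mem_biUnion.mp hx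
          exact hkey v hv hxv
        · intro x hx
          rw [hΩ] at hx
          simp only [Finset.mem_insert, Finset.mem_singleton] at hx
          rcases hx with rfl | rfl | rfl | rfl
          · exact Finset.mem_biUnion.mpr ⟨s, hs, has⟩
          · exact Finset.mem_biUnion.mpr ⟨s, hs, hbs⟩
          · exact Finset.mem_biUnion.mpr ⟨s, hs, hcs⟩
          · exact Finset.mem_biUnion.mpr ⟨t, ht, hdt⟩
      have hC4 : C.card ≤ 4 := by
        have hsubP : C ⊆ Ω.powersetCard 3 := by
          intro v hv
          rw [Finset.mem_powersetCard]
          exact ⟨hkey v hv, h3 v hv⟩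
        have hle := Finset.card_le_card hsubP
        rwa [Finset.card_powersetCard, hΩcard] at hle
      rw [hVeq, hΩcard]
      exact ⟨hC4, fun _ => rfl⟩

/-- Main structural bound: a family with pairwise intersections of size 0 or 2
has at most as many members as its support, with equality (or deficit 1)
forcing the support size to be divisible by 4. -/
lemma main_lemma (F : Finset (Finset α)) :
    (∀ s ∈ F, s.card = 3) →
    (∀ s ∈ F, ∀ t ∈ F, s ≠ t → (s ∩ t).card = 0 ∨ (s ∩ t).card = 2) →
    F.card ≤ (F.biUnion id).card ∧
      ((F.biUnion id).card ≤ F.card + 1 → 4 ∣ (F.biUnion id).card) := by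
  classical
  induction F using Finset.strongInduction with
  | _ F ih =>
    intro h3 hpair
    rcases F.eq_empty_or_nonempty with rfl | ⟨s₀, hs₀⟩
    · simp
    · set p : Finset α → Prop := fun t => s₀ = t ∨ (s₀ ∩ t).card = 2 with hp
      set C := F.filter p with hC
      set F' := F.filter (fun t => ¬ p t) with hF'
      have hCF : C ⊆ F := Finset.filter_subset _ _
      have hF'F : F' ⊆ F := Finset.filter_subset _ _
      have hs₀C : s₀ ∈ C := Finset.mem_filter.mpr ⟨hs₀, Or.inl rfl⟩
      have hs₀F' : s₀ ∉ F' := by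
        intro h
        exact (Finset.mem_filter.mp h).2 (Or.inl rfl)
      have hssub : F' ⊂ F :=
        (Finset.ssubset_iff_of_subset hF'F).mpr ⟨s₀, hs₀, hs₀F'⟩
      -- transitivity of the class relation
      have hR : ∀ u ∈ C, ∀ v ∈ F, (u ∩ v).card = 2 → v ∈ C := by
        intro u huC v hv h2
        have hu := Finset.mem_filter.mp huC
        by_cases hv0 : s₀ = v
        · exact Finset.mem_filter.mpr ⟨hv, Or.inl hv0⟩
        · rcases hu.2 with rfl | hs0u
          · exact Finset.mem_filter.mpr ⟨hv, Or.inr h2⟩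
          · rcases hpair s₀ hs₀ v hv hv0 with h0 | hgood
            · exfalso
              exact trans_aux (h3 u hu.1) hs0u h2 (Finset.card_eq_zero.mp h0)
            · exact Finset.mem_filter.mpr ⟨hv, Or.inr hgood⟩
      -- within the class, all pairs meet in 2 elements
      have h2C : ∀ u ∈ C, ∀ v ∈ C, u ≠ v → (u ∩ v).card = 2 := by
        intro u huC v hvC huv
        rcases hpair u (hCF huC) v (hCF hvC) huv with h0 | h2
        case inr => exact h2
        · exfalso
          have hu := (Finset.mem_filter.mp huC).2
          have hv := (Finset.mem_filter.mp hvC).2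
          rcases hu with rfl | hsu
          · rcases hv with rfl | hsv
            · exact huv rfl
            · rw [Finset.card_eq_zero.mp h0] at hsv
              simp at hsv
          · rcases hv with rfl | hsv
            · rw [Finset.inter_comm] at h0
              rw [Finset.card_eq_zero.mp h0] at hsu
              simp at hsu
            · refine trans_aux (h3 s₀ hs₀) ?_ hsv (Finset.card_eq_zero.mp h0)
              rwa [Finset.inter_comm]
      -- supports of the class and the rest are disjoint
      have hdisj : Disjoint (C.biUnion id) (F'.biUnion id) := by
        rw [Finset.disjoint_left]
        intro x hx hx'
        obtain ⟨u, huC, hxu⟩ := Finset.mem_biUnion.mp hx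
        obtain ⟨v, hvF', hxv⟩ := Finset.mem_biUnion.mp hx'
        have hvF := Finset.mem_filter.mp hvF'
        have huv : u ≠ v := by
          rintro rfl
          exact hvF.2 (Finset.mem_filter.mp huC).2
        rcases hpair u (hCF huC) v hvF.1 huv with h0 | h2
        · have : x ∈ u ∩ v := Finset.mem_inter.mpr ⟨hxu, hxv⟩
          rw [Finset.card_eq_zero.mp h0] at this
          simp at this
        · exact hvF.2 (Finset.mem_filter.mp (hR u huC v hvF.1 h2)).2
      have hcards : C.card + F'.card = F.card := by
        rw [hC, hF']
        exact Finset.card_filter_add_card_filter_not _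
      have hbiU : F.biUnion id = C.biUnion id ∪ F'.biUnion id := by
        ext x
        simp only [Finset.mem_biUnion, Finset.mem_union, id]
        constructor
        · rintro ⟨v, hv, hxv⟩
          by_cases hpv : p v
          · exact Or.inl ⟨v, Finset.mem_filter.mpr ⟨hv, hpv⟩, hxv⟩
          · exact Or.inr ⟨v, Finset.mem_filter.mpr ⟨hv, hpv⟩, hxv⟩
        · rintro (⟨v, hv, hxv⟩ | ⟨v, hv, hxv⟩)
          · exact ⟨v, hCF hv, hxv⟩
          · exact ⟨v, hF'F hv, hxv⟩
      have hVcards : (F.biUnion id).card = (C.biUnion id).card + (F'.biUnion id).card := by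
        rw [hbiU, Finset.card_union_of_disjoint hdisj]
      obtain ⟨hc1, hc2⟩ := class_lemma C ⟨s₀, hs₀C⟩ (fun s hs => h3 s (hCF hs)) h2C
      obtain ⟨ih1, ih2⟩ := ih F' hssub (fun s hs => h3 s (hF'F hs))
        (fun s hs t ht => hpair s (hF'F hs) t (hF'F ht))
      constructor
      · omega
      · intro hle
        have h1 : (C.biUnion id).card ≤ C.card + 1 := by omega
        have h2 : (F'.biUnion id).card ≤ F'.card + 1 := by omega
        have := hc2 h1
        have := ih2 h2
        omega

end NagyAux

/-- A family of `3`-element subsets of `{1, …, n}` in which no two distinct sets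
intersect in exactly one element has size at most `n - c(n)`; in particular at most
`n` when `n ≡ 0 (mod 4)`. -/
theorem nagy_upper (n : ℕ) (F : Finset (Finset (Fin n)))
    (h3 : ∀ s ∈ F, s.card = 3)
    (hindep : ∀ s ∈ F, ∀ t ∈ F, s ≠ t → (s ∩ t).card ≠ 1) :
    (n % 4 = 0 → F.card ≤ n) ∧ F.card ≤ n - c n := by
  classical
  have hpair : ∀ s ∈ F, ∀ t ∈ F, s ≠ t → (s ∩ t).card = 0 ∨ (s ∩ t).card = 2 := by
    intro s hs t ht hst
    have h1 := NagyAux.inter_card_lt (h3 s hs) (h3 t ht) hst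
    have h2 := hindep s hs t ht hst
    omega
  obtain ⟨hb, hd⟩ := NagyAux.main_lemma F h3 hpair
  have hVn : (F.biUnion id).card ≤ n := by
    have := Finset.card_le_univ (F.biUnion id)
    simpa using this
  constructor
  · intro _
    omega
  · rcases le_or_gt ((F.biUnion id).card) (F.card + 1) with hle | hlt
    · have hdvd := hd hle
      unfold c
      split_ifs <;> omega
    · unfold c
      split_ifs <;> omega
end

section
/- In G_n, any support (3-element set of coordinate positions) contains at most 4 pairwise non-adjacent vertices: among the 8 sign patterns on a fixed support, an independent set contains at most 4 vectors. -/
/-- In `G_n` any fixed support (`3`-element set of coordinate positions) carries at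
most `4` vertices of an independent set. -/
theorem indep_support_le_four (n : ℕ) (S : Finset (Gvert n))
    (hS : IsIndep (G n) ↑S) (b : Finset (Fin n)) :
    (S.filter fun v => (Finset.univ.filter fun i => v.1 i ≠ 0) = b).card ≤ 4 := by
  classical
  set T := S.filter fun v => (Finset.univ.filter fun i => v.1 i ≠ 0) = b with hT
  rcases T.eq_empty_or_nonempty with h | ⟨w, hw⟩
  · simp [h]
  have hb3 : b.card = 3 := by
    have h2 := (Finset.mem_filter.mp hw).2
    rw [← h2]; exact w.2.2
  obtain ⟨x, y, z, hxy, hxz, hyz, hbxyz⟩ := Finset.card_eq_three.mp hb3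
  have hxb : x ∈ b := by rw [hbxyz]; simp
  have hyb : y ∈ b := by rw [hbxyz]; simp
  have hzb : z ∈ b := by rw [hbxyz]; simp
  -- key facts about members of T
  have hmem : ∀ v : Gvert n, v ∈ T →
      (∀ i ∈ b, v.1 i = -1 ∨ v.1 i = 1) ∧ (∀ i ∉ b, v.1 i = 0) := by
    intro v hv
    have hsupp := (Finset.mem_filter.mp hv).2
    constructor
    · intro i hi
      have hne : v.1 i ≠ 0 := by
        rw [← hsupp] at hi; simpa using hi
      rcases v.2.1 i with h | h | h
      · exact Or.inl h
      · exact absurd h hne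
      · exact Or.inr h
    · intro i hi
      by_contra h
      exact hi (by rw [← hsupp]; simpa using h)
  have hinj : Set.InjOn (fun v : Gvert n => (v.1 y, v.1 z)) ↑T := by
    intro u hu v hv heq
    replace hu : u ∈ T := hu
    replace hv : v ∈ T := hv
    by_contra hne
    have hy : u.1 y = v.1 y := congrArg Prod.fst heq
    have hz : u.1 z = v.1 z := congrArg Prod.snd heq
    obtain ⟨hu1, hu0⟩ := hmem u hu
    obtain ⟨hv1, hv0⟩ := hmem v hv
    have hx : u.1 x ≠ v.1 x := by
      intro hxx
      apply hne
      apply Subtype.ext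
      funext i
      by_cases hib : i ∈ b
      · rw [hbxyz] at hib
        simp only [Finset.mem_insert, Finset.mem_singleton] at hib
        rcases hib with rfl | rfl | rfl
        · exact hxx
        · exact hy
        · exact hz
      · rw [hu0 i hib, hv0 i hib]
    -- compute the scalar product
    have hsum : ∑ i, u.1 i * v.1 i = 1 := by
      have hzero : ∀ i ∈ (Finset.univ : Finset (Fin n)), i ∉ b → u.1 i * v.1 i = 0 := by
        intro i _ hib
        rw [hu0 i hib, zero_mul]
      rw [← Finset.sum_subset (Finset.subset_univ b) hzero, hbxyz]
      rw [Finset.sum_insert (by simp [hxy, hxz]),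
        Finset.sum_insert (by simp [hyz]), Finset.sum_singleton]
      have hxval : u.1 x * v.1 x = -1 := by
        rcases hu1 x hxb with h1 | h1 <;> rcases hv1 x hxb with h2 | h2
        · exact absurd (h1.trans h2.symm) hx
        · rw [h1, h2]; ring
        · rw [h1, h2]; ring
        · exact absurd (h1.trans h2.symm) hx
      have hyval : u.1 y * v.1 y = 1 := by
        rcases hu1 y hyb with h1 | h1 <;> rw [h1, ← hy, h1] <;> ring
      have hzval : u.1 z * v.1 z = 1 := by
        rcases hu1 z hzb with h1 | h1 <;> rw [h1, ← hz, h1] <;> ring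
      rw [hxval, hyval, hzval]; ring
    exact hS (Finset.mem_coe.mpr (Finset.mem_filter.mp hu).1)
      (Finset.mem_coe.mpr (Finset.mem_filter.mp hv).1) hne ⟨hne, hsum⟩
  have hmaps : ∀ v ∈ T, (v.1 y, v.1 z) ∈ (({-1, 1} ×ˢ {-1, 1}) : Finset (ℤ × ℤ)) := by
    intro v hv
    obtain ⟨hv1, -⟩ := hmem v hv
    simp only [Finset.mem_product, Finset.mem_insert, Finset.mem_singleton]
    exact ⟨hv1 y hyb, hv1 z hzb⟩
  calc T.card ≤ (({-1, 1} ×ˢ {-1, 1}) : Finset (ℤ × ℤ)).card :=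
        Finset.card_le_card_of_injOn _ hmaps hinj
    _ = 4 := by decide
end

section
/- In G_n, no 3-element support contains more than two vertices from the neighborhood of a fixed signplace: if all vertices in a set S intersect coordinate i with value +1 and S is independent, then at most 2 vertices of S share the same support. -/
/-- If all vertices of an independent set `S` in `G_n` intersect the signplace `i⁺`
(i.e. have `i`-th coordinate `+1`), then at most `2` vertices of `S` share any given
support. -/
theorem neighborhood_support_le_two (n : ℕ) (i : Fin n) (S : Finset (Gvert n))
    (hS : IsIndep (G n) ↑S) (hplus : ∀ v ∈ S, v.1 i = 1) (b : Finset (Fin n)) :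
    (S.filter fun v => (Finset.univ.filter fun j => v.1 j ≠ 0) = b).card ≤ 2 := by
  by_contra hcard
  push_neg at hcard
  rw [Finset.two_lt_card_iff] at hcard
  obtain ⟨u, v, w, hu, hv, hw, huv, huw, hvw⟩ := hcard
  simp only [Finset.mem_filter] at hu hv hw
  obtain ⟨huS, hub⟩ := hu
  obtain ⟨hvS, hvb⟩ := hv
  obtain ⟨hwS, hwb⟩ := hw
  have hib : i ∈ b := by
    rw [← hub]; simp [hplus u huS]
  have hbcard : b.card = 3 := by rw [← hub]; exact u.2.2
  have herase : (b.erase i).card = 2 := by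
    rw [Finset.card_erase_of_mem hib, hbcard]
  obtain ⟨a, d, had, hbad⟩ := Finset.card_eq_two.mp herase
  have haei : a ∈ b.erase i := by rw [hbad]; simp
  have hdei : d ∈ b.erase i := by rw [hbad]; simp
  have hab : a ∈ b := Finset.mem_of_mem_erase haei
  have hai : a ≠ i := Finset.ne_of_mem_erase haei
  have hdb : d ∈ b := Finset.mem_of_mem_erase hdei
  have hdi : d ≠ i := Finset.ne_of_mem_erase hdei
  have hbeq : b = insert i {a, d} := by rw [← hbad, Finset.insert_erase hib]
  have hinotin : i ∉ ({a, d} : Finset (Fin n)) := by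
    simp [Ne.symm hai, Ne.symm hdi]
  -- values at support positions are ±1
  have hval : ∀ (x : Gvert n), (Finset.univ.filter fun j => x.1 j ≠ 0) = b →
      ∀ j ∈ b, x.1 j = -1 ∨ x.1 j = 1 := by
    intro x hx j hj
    have hne : x.1 j ≠ 0 := by
      have : j ∈ Finset.univ.filter fun j => x.1 j ≠ 0 := hx ▸ hj
      simpa using this
    rcases x.2.1 j with h | h | h
    · exact Or.inl h
    · exact absurd h hne
    · exact Or.inr h
  have hzero : ∀ (x : Gvert n), (Finset.univ.filter fun j => x.1 j ≠ 0) = b →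
      ∀ j, j ∉ b → x.1 j = 0 := by
    intro x hx j hj
    by_contra h
    exact hj (hx ▸ (by simpa using h))
  have key : ∀ x y : Gvert n, x ∈ S → y ∈ S → x ≠ y →
      (Finset.univ.filter fun j => x.1 j ≠ 0) = b →
      (Finset.univ.filter fun j => y.1 j ≠ 0) = b →
      x.1 a * y.1 a = -1 ∧ x.1 d * y.1 d = -1 := by
    intro x y hx hy hxy hxb hyb
    have hadj : ¬ (G n).Adj x y := hS (Finset.mem_coe.mpr hx) (Finset.mem_coe.mpr hy) hxy
    have hsum : ∑ j, x.1 j * y.1 j ≠ 1 := fun h => hadj ⟨hxy, h⟩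
    have hsum2 : ∑ j, x.1 j * y.1 j = ∑ j ∈ b, x.1 j * y.1 j :=
      (Finset.sum_subset (Finset.subset_univ b) fun j _ hj => by
        rw [hzero x hxb j hj, zero_mul]).symm
    have hsum3 : ∑ j ∈ b, x.1 j * y.1 j
        = x.1 i * y.1 i + (x.1 a * y.1 a + x.1 d * y.1 d) := by
      rw [hbeq, Finset.sum_insert hinotin, Finset.sum_pair had]
    rw [hsum2, hsum3, hplus x hx, hplus y hy, one_mul] at hsum
    have hdiff : x.1 a ≠ y.1 a ∨ x.1 d ≠ y.1 d := by
      by_contra h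
      push_neg at h
      apply hxy
      apply Subtype.ext
      funext j
      by_cases hj : j ∈ b
      · rw [hbeq] at hj
        simp only [Finset.mem_insert, Finset.mem_singleton] at hj
        rcases hj with rfl | rfl | rfl
        · rw [hplus x hx, hplus y hy]
        · exact h.1
        · exact h.2
      · rw [hzero x hxb j hj, hzero y hyb j hj]
    rcases hval x hxb a hab with h1 | h1 <;> rcases hval y hyb a hab with h2 | h2 <;>
      rcases hval x hxb d hdb with h3 | h3 <;> rcases hval y hyb d hdb with h4 | h4 <;>
      rw [h1, h2, h3, h4] at hsum hdiff ⊢ <;> (revert hsum hdiff; norm_num)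
  obtain ⟨huv_a, -⟩ := key u v huS hvS huv hub hvb
  obtain ⟨huw_a, -⟩ := key u w huS hwS huw hub hwb
  obtain ⟨hvw_a, -⟩ := key v w hvS hwS hvw hvb hwb
  rcases hval u hub a hab with h1 | h1 <;> rcases hval v hvb a hab with h2 | h2 <;>
    rcases hval w hwb a hab with h3 | h3 <;>
    rw [h1, h2] at huv_a <;> rw [h1, h3] at huw_a <;> rw [h2, h3] at hvw_a <;>
    (revert huv_a huw_a hvw_a; norm_num)
end
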